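/- Let c, z ∈ R^d with ||c|| = 1. If i ≥ ⌈log₂(||z|| + d)⌉ + 2, then the angle between 2^{i-1}c + z and 2^i c + z is at most 5(||z|| + d)/2^{i+1}. -/

import Mathlib

open Real InnerProductGeometry RealInnerProductSpace

set_option maxHeartbeats 1000000 in
private lemma key_angle_arith (P N s u dd : ℝ) (h1 : 1 ≤ dd) (h2 : N + dd ≤ P)
    (h3 : u^2 + s^2 = N^2) (h4 : 0 ≤ u) (h5 : -N ≤ s) (h6 : s ≤ N) (hN : 0 ≤ N) :
    8*π*P^2*u ≤ 5*(N+dd)*((2*P+s)*(4*P+s)) := by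
  have hpi : π < 3.15 := Real.pi_lt_d2
  have hP : N + 1 ≤ P := by linarith
  have hP0 : (0:ℝ) ≤ P := by linarith
  have hs2 : 0 < 2*P + s := by linarith
  have hX : (0:ℝ) ≤ (N+1)*(2*P+s) := by positivity
  have hsq : 2.8224*(P^2*(N^2 - s^2)) ≤ ((N+1)*(2*P+s))^2 := by
    rcases le_or_gt 0 s with hs0 | hs0
    · nlinarith [sq_nonneg s, mul_nonneg hN hs0, sq_nonneg (P*N), sq_nonneg P, sq_nonneg N,
        mul_nonneg (mul_nonneg hN hN) hs0,
        mul_nonneg (mul_nonneg hP0 hP0) (mul_nonneg hN hs0)]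
    · have k1 : P*(2*N+s) ≤ N*(2*P+s) := by nlinarith
      have k2 : 0 ≤ 2*N + s := by linarith
      have k3 : 2.8224*(N^2 - s^2) ≤ (2*N+s)^2 := by nlinarith [sq_nonneg (s + 0.5233*N)]
      have k4 : (P*(2*N+s))^2 ≤ (N*(2*P+s))^2 := by
        have h := mul_self_le_mul_self (mul_nonneg hP0 k2) k1
        nlinarith [h]
      nlinarith [k4, mul_le_mul_of_nonneg_left k3 (sq_nonneg P), mul_nonneg hN (le_of_lt hs2)]
  have hmain : 1.68*(P*u) ≤ (N+1)*(2*P+s) := by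
    nlinarith [hsq, mul_nonneg (mul_nonneg hP0 h4) hX, mul_nonneg hP0 h4]
  have c2 : 15*P*(1.68*(P*u)) ≤ 15*P*((N+1)*(2*P+s)) :=
    mul_le_mul_of_nonneg_left hmain (by linarith)
  have c4 : 5*((N+1)*(2*P+s))*(3*P) ≤ 5*((N+1)*(2*P+s))*(4*P+s) :=
    mul_le_mul_of_nonneg_left (by linarith) (by linarith)
  have hq : (0:ℝ) ≤ (2*P+s)*(4*P+s) := mul_nonneg (by linarith) (by linarith)
  have c5 : 5*(N+1)*((2*P+s)*(4*P+s)) ≤ 5*(N+dd)*((2*P+s)*(4*P+s)) :=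
    mul_le_mul_of_nonneg_right (by linarith) hq
  have c0 : 8*π*P^2*u ≤ 25.2*(P^2*u) := by
    have : (0:ℝ) ≤ P^2*u := by positivity
    nlinarith [this]
  calc 8*π*P^2*u ≤ 25.2*(P^2*u) := c0
    _ = 15*P*(1.68*(P*u)) := by ring
    _ ≤ 15*P*((N+1)*(2*P+s)) := c2
    _ = 5*((N+1)*(2*P+s))*(3*P) := by ring
    _ ≤ 5*((N+1)*(2*P+s))*(4*P+s) := c4
    _ = 5*(N+1)*((2*P+s)*(4*P+s)) := by ring
    _ ≤ 5*(N+dd)*((2*P+s)*(4*P+s)) := c5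

set_option maxHeartbeats 1600000 in
/-- Angle bound between consecutive interpolated objectives: for `‖c‖ = 1` and
`i ≥ ⌈log₂(‖z‖ + d)⌉ + 2`, the angle between `2^{i-1}c + z` and `2^i c + z` is at most
`5(‖z‖ + d)/2^{i+1}`. -/
theorem stmt_13 (d : ℕ) (c z : EuclideanSpace ℝ (Fin d)) (hc : ‖c‖ = 1) (i : ℕ)
    (hi : ⌈Real.logb 2 (‖z‖ + d)⌉ + 2 ≤ (i : ℤ)) :
    InnerProductGeometry.angle ((2 : ℝ) ^ ((i : ℤ) - 1) • c + z)
        ((2 : ℝ) ^ ((i : ℤ)) • c + z) ≤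
      5 * (‖z‖ + d) / 2 ^ (i + 1) := by
  rcases Nat.eq_zero_or_pos d with hd0 | hd0
  · exfalso
    subst hd0
    have hcz : c = 0 := Subsingleton.elim c 0
    rw [hcz, norm_zero] at hc
    exact one_ne_zero hc.symm
  set P : ℝ := 2 ^ ((i:ℤ) - 2) with hPdef
  have hP0 : (0:ℝ) < P := by positivity
  have hdpos : (0:ℝ) < d := by exact_mod_cast hd0
  have hd1 : (1:ℝ) ≤ d := by exact_mod_cast hd0
  have hr0 : (0:ℝ) < ‖z‖ + d := by positivity
  have hrP : ‖z‖ + d ≤ P := by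
    have hceil : ((⌈Real.logb 2 (‖z‖ + d)⌉ : ℤ) : ℝ) ≤ (((i:ℤ) - 2 : ℤ) : ℝ) := by
      exact_mod_cast (by omega : ⌈Real.logb 2 (‖z‖ + d)⌉ ≤ (i:ℤ) - 2)
    have h1 : Real.logb 2 (‖z‖ + d) ≤ (((i:ℤ) - 2 : ℤ) : ℝ) :=
      le_trans (Int.le_ceil _) hceil
    calc ‖z‖ + d = (2:ℝ) ^ Real.logb 2 (‖z‖ + d) :=
          (Real.rpow_logb (by norm_num) (by norm_num) hr0).symm
      _ ≤ (2:ℝ) ^ ((((i:ℤ) - 2 : ℤ)) : ℝ) :=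
          Real.rpow_le_rpow_of_exponent_le (by norm_num) h1
      _ = P := by rw [Real.rpow_intCast]
  have h2P : (2:ℝ) ^ ((i:ℤ) - 1) = 2 * P := by
    rw [hPdef, show (i:ℤ) - 1 = 1 + ((i:ℤ) - 2) by ring,
      zpow_add₀ (by norm_num : (2:ℝ) ≠ 0)]
    norm_num
  have h4P : (2:ℝ) ^ ((i:ℤ)) = 4 * P := by
    rw [hPdef, show (i:ℤ) = 2 + ((i:ℤ) - 2) by ring,
      zpow_add₀ (by norm_num : (2:ℝ) ≠ 0)]
    norm_num
  have h8P : (2:ℝ) ^ (i + 1) = 8 * P := by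
    rw [hPdef, show ((2:ℝ) ^ (i+1) : ℝ) = (2:ℝ) ^ ((i+1 : ℕ) : ℤ) from (zpow_natCast 2 (i+1)).symm,
      show ((i+1 : ℕ) : ℤ) = 3 + ((i:ℤ) - 2) by push_cast; ring,
      zpow_add₀ (by norm_num : (2:ℝ) ≠ 0)]
    norm_num
  rw [h2P, h4P, h8P]
  set a : EuclideanSpace ℝ (Fin d) := (2*P) • c + z with ha_def
  set b : EuclideanSpace ℝ (Fin d) := (4*P) • c + z with hb_def
  set s : ℝ := ⟪c, z⟫ with hs_def
  have hs_abs : |s| ≤ ‖z‖ := by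
    have := abs_real_inner_le_norm c z
    rwa [hc, one_mul] at this
  have hs_lb : -‖z‖ ≤ s := (abs_le.1 hs_abs).1
  have hs_ub : s ≤ ‖z‖ := (abs_le.1 hs_abs).2
  have hs2z : s^2 ≤ ‖z‖^2 := by nlinarith [abs_nonneg s, sq_abs s]
  have expand : ∀ α β : ℝ, ⟪α • c + z, β • c + z⟫ = α*β + (α+β)*s + ‖z‖^2 := by
    intro α β
    simp only [inner_add_left, inner_add_right, real_inner_smul_left, real_inner_smul_right,
      real_inner_self_eq_norm_mul_norm, hc]
    have hzc : (inner ℝ z c : ℝ) = s := by rw [real_inner_comm]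
    rw [hzc]
    ring
  have haa : ⟪a, a⟫ = 4*P^2 + 4*P*s + ‖z‖^2 := by rw [ha_def, expand]; ring
  have hbb : ⟪b, b⟫ = 16*P^2 + 8*P*s + ‖z‖^2 := by rw [hb_def, expand]; ring
  have hab : ⟪a, b⟫ = 8*P^2 + 6*P*s + ‖z‖^2 := by rw [ha_def, hb_def, expand]; ring
  have hQ1 : (0:ℝ) < 2*P + s := by linarith
  have hQ2 : (0:ℝ) < 4*P + s := by linarith
  have sqle : ∀ x y : ℝ, 0 ≤ x → 0 ≤ y → x^2 ≤ y^2 → x ≤ y := by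
    intro x y hx hy h
    nlinarith
  have hna : 2*P + s ≤ ‖a‖ := by
    refine sqle _ _ hQ1.le (norm_nonneg a) ?_
    have hn : ‖a‖^2 = ⟪a, a⟫ := by rw [real_inner_self_eq_norm_mul_norm]; ring
    rw [hn, haa]; nlinarith
  have hnb : 4*P + s ≤ ‖b‖ := by
    refine sqle _ _ hQ2.le (norm_nonneg b) ?_
    have hn : ‖b‖^2 = ⟪b, b⟫ := by rw [real_inner_self_eq_norm_mul_norm]; ring
    rw [hn, hbb]; nlinarith
  set u : ℝ := Real.sqrt (‖z‖^2 - s^2) with hu_def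
  have hu0 : 0 ≤ u := Real.sqrt_nonneg _
  have hu2 : u^2 = ‖z‖^2 - s^2 := Real.sq_sqrt (by linarith)
  have hθ2 : InnerProductGeometry.angle a b ≤ π/2 := by
    have hip : (0:ℝ) ≤ ⟪a, b⟫ := by rw [hab]; nlinarith
    unfold InnerProductGeometry.angle
    exact Real.arccos_le_pi_div_two.mpr (div_nonneg hip (by positivity))
  have hθ0 : 0 ≤ InnerProductGeometry.angle a b := InnerProductGeometry.angle_nonneg a b
  have hsin_nonneg : 0 ≤ Real.sin (InnerProductGeometry.angle a b) :=
    Real.sin_nonneg_of_nonneg_of_le_pi hθ0 (InnerProductGeometry.angle_le_pi a b)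
  have hsinval : Real.sin (InnerProductGeometry.angle a b) * (‖a‖ * ‖b‖) = 2*P*u := by
    rw [InnerProductGeometry.sin_angle_mul_norm_mul_norm a b]
    have hdiff : ⟪a,a⟫ * ⟪b,b⟫ - ⟪a,b⟫ * ⟪a,b⟫ = (2*P)^2 * (‖z‖^2 - s^2) := by
      rw [haa, hbb, hab]; ring
    rw [hdiff, Real.sqrt_mul (sq_nonneg _), Real.sqrt_sq (by linarith), hu_def]
  have m3 : InnerProductGeometry.angle a b ≤ π/2 * Real.sin (InnerProductGeometry.angle a b) := by
    have hms := Real.mul_le_sin hθ0 hθ2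
    have hπ : (0:ℝ) < π := Real.pi_pos
    calc InnerProductGeometry.angle a b = π/2 * (2/π * InnerProductGeometry.angle a b) := by
          field_simp
      _ ≤ π/2 * Real.sin (InnerProductGeometry.angle a b) :=
          mul_le_mul_of_nonneg_left hms (by positivity)
  have step1 : InnerProductGeometry.angle a b * ((2*P+s)*(4*P+s)) ≤ π*P*u := by
    have m1 : (2*P+s)*(4*P+s) ≤ ‖a‖*‖b‖ := mul_le_mul hna hnb hQ2.le (norm_nonneg a)
    have m2 : Real.sin (InnerProductGeometry.angle a b) * ((2*P+s)*(4*P+s)) ≤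
        Real.sin (InnerProductGeometry.angle a b) * (‖a‖*‖b‖) :=
      mul_le_mul_of_nonneg_left m1 hsin_nonneg
    have hπ : (0:ℝ) < π := Real.pi_pos
    calc InnerProductGeometry.angle a b * ((2*P+s)*(4*P+s))
        ≤ (π/2 * Real.sin (InnerProductGeometry.angle a b)) * ((2*P+s)*(4*P+s)) :=
          mul_le_mul_of_nonneg_right m3 (by positivity)
      _ = π/2 * (Real.sin (InnerProductGeometry.angle a b) * ((2*P+s)*(4*P+s))) := by ring
      _ ≤ π/2 * (Real.sin (InnerProductGeometry.angle a b) * (‖a‖*‖b‖)) :=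
          mul_le_mul_of_nonneg_left m2 (by positivity)
      _ = π/2 * (2*P*u) := by rw [hsinval]
      _ = π*P*u := by ring
  have hkey : 8*π*P^2*u ≤ 5*(‖z‖+(d:ℝ))*((2*P+s)*(4*P+s)) :=
    key_angle_arith P ‖z‖ s u d hd1 hrP (by linarith) hu0 hs_lb hs_ub (norm_nonneg z)
  have hQpos : (0:ℝ) < (2*P+s)*(4*P+s) := mul_pos hQ1 hQ2
  rw [le_div_iff₀ (by positivity : (0:ℝ) < 8*P)]
  refine le_of_mul_le_mul_right ?_ hQpos
  calc InnerProductGeometry.angle a b * (8*P) * ((2*P+s)*(4*P+s))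
      = 8*P*(InnerProductGeometry.angle a b * ((2*P+s)*(4*P+s))) := by ring
    _ ≤ 8*P*(π*P*u) := mul_le_mul_of_nonneg_left step1 (by positivity)
    _ = 8*π*P^2*u := by ring
    _ ≤ 5*(‖z‖+(d:ℝ))*((2*P+s)*(4*P+s)) := hkey
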